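/- Let ℋ be a d-dimensional Hilbert space with orthonormal bases {φ_j} and {ψ_k = ℱ*φ_k} related by the finite Fourier transform, Q_j = |φ_j⟩⟨φ_j|, P_k = |ψ_k⟩⟨ψ_k|. A Weyl-covariant observable pair (μ*Q, ν*P), where (μ*Q)_j = Σ_q μ_{j-q} Q_q and (ν*P)_k = Σ_p ν_{k-p} P_p for probability distributions μ, ν on ℤ_d, is jointly measurable if and only if there exists a state ρ ∈ S(ℋ) with μ_j = tr[ρ Q_{-j}] and ν_k = tr[ρ P_{-k}] for all j, k ∈ ℤ_d. -/

import Mathlib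

open scoped ComplexOrder

open Matrix in
/-- The Choi matrix of a linear map between matrix algebras. -/
noncomputable def choi {n m : Type*} [Fintype n] [DecidableEq n] [Fintype m]
    (Φ : Matrix n n ℂ →ₗ[ℂ] Matrix m m ℂ) : Matrix (n × m) (n × m) ℂ :=
  Matrix.of fun p q => Φ (Matrix.single p.1 q.1 1) p.2 q.2

/-- Complete positivity of a linear map between matrix algebras
(positivity of its Choi matrix). -/
def IsCP {n m : Type*} [Fintype n] [DecidableEq n] [Fintype m]
    (Φ : Matrix n n ℂ →ₗ[ℂ] Matrix m m ℂ) : Prop :=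
  (choi Φ).PosSemidef

/-- Trace preservation. -/
def IsTP {n m : Type*} [Fintype n] [Fintype m]
    (Φ : Matrix n n ℂ →ₗ[ℂ] Matrix m m ℂ) : Prop :=
  ∀ ρ, (Φ ρ).trace = ρ.trace

/-- A quantum channel: a completely positive trace-preserving linear map. -/
def IsChannel {n m : Type*} [Fintype n] [DecidableEq n] [Fintype m]
    (Φ : Matrix n n ℂ →ₗ[ℂ] Matrix m m ℂ) : Prop :=
  IsCP Φ ∧ IsTP Φ

/-- A (finite-outcome) POVM: positive operators summing to the identity. -/
def IsPOVM {n Ω : Type*} [Fintype n] [DecidableEq n] [Fintype Ω]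
    (M : Ω → Matrix n n ℂ) : Prop :=
  (∀ x, (M x).PosSemidef) ∧ ∑ x, M x = 1

/-- Joint measurability of two POVMs: existence of a joint POVM with the
given marginals. -/
def JointlyMeasurable {n Ω Ω' : Type*} [Fintype n] [DecidableEq n]
    [Fintype Ω] [Fintype Ω']
    (A : Ω → Matrix n n ℂ) (B : Ω' → Matrix n n ℂ) : Prop :=
  ∃ G : Ω × Ω' → Matrix n n ℂ, IsPOVM G ∧
    (∀ x, ∑ y, G (x, y) = A x) ∧ (∀ y, ∑ x, G (x, y) = B y)

/-- The character `m ↦ e^{2πi m/d}` of `ℤ_d`. -/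
noncomputable def chi (d : ℕ) [NeZero d] (m : ZMod d) : ℂ :=
  Complex.exp (2 * Real.pi * Complex.I * (m.val : ℂ) / d)

/-- The rank-1 sharp observable `Q_j = |φ_j⟩⟨φ_j|` in the standard basis. -/
noncomputable def Qobs (d : ℕ) [NeZero d] (j : ZMod d) : Matrix (ZMod d) (ZMod d) ℂ :=
  Matrix.single j j 1

/-- The Fourier-conjugate rank-1 sharp observable `P_k = |ψ_k⟩⟨ψ_k|`,
where `ψ_k = ℱ*φ_k`. -/
noncomputable def Pobs (d : ℕ) [NeZero d] (k : ZMod d) : Matrix (ZMod d) (ZMod d) ℂ :=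
  Matrix.of fun i j => chi d ((i - j) * k) / d

namespace S13
variable (d : ℕ) [NeZero d]



noncomputable def zeta : ℂ := Complex.exp (2 * Real.pi * Complex.I / d)

lemma prim : IsPrimitiveRoot (zeta d) d := Complex.isPrimitiveRoot_exp d (NeZero.ne d)

lemma chi_eq (m : ZMod d) : chi d m = zeta d ^ m.val := by
  rw [zeta, ← Complex.exp_nat_mul, chi]
  ring_nf

lemma zeta_pow_mod (n : ℕ) : zeta d ^ n = zeta d ^ (n % d) := by
  conv_lhs => rw [← Nat.mod_add_div n d, pow_add, pow_mul, (prim d).pow_eq_one, one_pow, mul_one]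

lemma chi_add (a b : ZMod d) : chi d (a + b) = chi d a * chi d b := by
  rw [chi_eq, chi_eq, chi_eq, ← pow_add, ZMod.val_add, ← zeta_pow_mod]

lemma chi_zero : chi d 0 = 1 := by
  rw [chi_eq]; simp

lemma chi_mul_neg (a : ZMod d) : chi d a * chi d (-a) = 1 := by
  rw [← chi_add, add_neg_cancel, chi_zero]

lemma chi_ne_zero (a : ZMod d) : chi d a ≠ 0 := by
  rw [chi_eq]; exact pow_ne_zero _ (Complex.exp_ne_zero _)

lemma chi_conj (a : ZMod d) : (starRingEnd ℂ) (chi d a) = chi d (-a) := by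
  have h1 : (starRingEnd ℂ) (chi d a) * chi d a = 1 := by
    rw [chi, ← Complex.exp_conj, ← Complex.exp_add]
    have h : (starRingEnd ℂ) (2 * Real.pi * Complex.I * (a.val : ℂ) / d)
        = -(2 * Real.pi * Complex.I * (a.val : ℂ) / d) := by
      simp only [map_div₀, map_mul, Complex.conj_I, Complex.conj_natCast, map_ofNat,
        Complex.conj_ofReal]
      ring
    rw [h, neg_add_cancel, Complex.exp_zero]
  have h2 := chi_mul_neg d a
  calc (starRingEnd ℂ) (chi d a)
      = (starRingEnd ℂ) (chi d a) * (chi d a * chi d (-a)) := by rw [h2, mul_one]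
    _ = ((starRingEnd ℂ) (chi d a) * chi d a) * chi d (-a) := by ring
    _ = chi d (-a) := by rw [h1, one_mul]

lemma chi_eq_one_iff (a : ZMod d) : chi d a = 1 ↔ a = 0 := by
  rw [chi_eq]
  constructor
  · intro h
    have hd := ((prim d).pow_eq_one_iff_dvd a.val).mp h
    have := Nat.eq_zero_of_dvd_of_lt hd
    rcases Nat.eq_zero_or_pos a.val with h0 | hpos
    · exact (ZMod.val_eq_zero a).mp h0
    · exact absurd (ZMod.val_lt a) (by omega)
  · rintro rfl; simp

lemma chi_pow_d (a : ZMod d) : chi d a ^ d = 1 := by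
  rw [chi_eq, ← pow_mul, mul_comm, pow_mul, (prim d).pow_eq_one, one_pow]

lemma chi_mul_val (m a : ZMod d) : chi d (m * a) = chi d a ^ m.val := by
  rw [chi_eq, chi_eq, ZMod.val_mul, ← zeta_pow_mod, ← pow_mul, mul_comm m.val, pow_mul]

lemma sum_chi (a : ZMod d) : ∑ m : ZMod d, chi d (m * a) = if a = 0 then (d : ℂ) else 0 := by
  split_ifs with ha
  · subst ha
    simp [chi_zero]
  · have hsum : ∑ m : ZMod d, chi d (m * a) = ∑ n ∈ Finset.range d, chi d a ^ n := by
      simp_rw [chi_mul_val]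
      exact Finset.sum_nbij' (fun m => m.val) (fun n => (n : ZMod d))
        (fun m _ => Finset.mem_range.mpr (ZMod.val_lt m))
        (fun n _ => Finset.mem_univ _)
        (fun m _ => ZMod.natCast_rightInverse m)
        (fun n hn => ZMod.val_cast_of_lt (Finset.mem_range.mp hn))
        (fun m _ => rfl)
    rw [hsum, geom_sum_eq (fun h => ha ((chi_eq_one_iff d a).mp h)), chi_pow_d]
    simp

open Matrix
variable (d : ℕ) [NeZero d]

/-- Conjugation by the Weyl operator `W(q,p)`. -/
noncomputable def conjW (q p : ZMod d) (X : Matrix (ZMod d) (ZMod d) ℂ) :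
    Matrix (ZMod d) (ZMod d) ℂ :=
  Matrix.of fun i j => chi d (p * (i - j)) * X (i - q) (j - q)

lemma conjW_apply (q p : ZMod d) (X : Matrix (ZMod d) (ZMod d) ℂ) (i j : ZMod d) :
    conjW d q p X i j = chi d (p * (i - j)) * X (i - q) (j - q) := rfl

lemma chi_congr {a b : ZMod d} (h : a = b) : chi d a = chi d b := by rw [h]

lemma conjW_posSemidef (q p : ZMod d) {X : Matrix (ZMod d) (ZMod d) ℂ}
    (hX : X.PosSemidef) : (conjW d q p X).PosSemidef := by
  rw [Matrix.posSemidef_iff_dotProduct_mulVec]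
  constructor
  · show (conjW d q p X)ᴴ = conjW d q p X
    ext i j
    rw [Matrix.conjTranspose_apply, conjW_apply, conjW_apply, star_mul']
    have hH : (starRingEnd ℂ) (X (j - q) (i - q)) = X (i - q) (j - q) := by
      have := congrFun (congrFun hX.1 (i - q)) (j - q)
      simpa [Matrix.conjTranspose_apply] using this
    show (starRingEnd ℂ) (chi d (p * (j - i))) * (starRingEnd ℂ) (X (j - q) (i - q)) = _
    rw [hH, chi_conj, chi_congr d (show -(p * (j - i)) = p * (i - j) by ring)]
  · intro x
    set y : ZMod d → ℂ := fun a => chi d (-(p * a)) * x (a + q) with hy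
    have := hX.dotProduct_mulVec_nonneg y
    have key : dotProduct (star x) (conjW d q p X *ᵥ x)
        = dotProduct (star y) (X *ᵥ y) := by
      simp only [dotProduct, Matrix.mulVec, Pi.star_apply, Finset.mul_sum]
      rw [← Fintype.sum_equiv (Equiv.addRight q) _ _ (fun a => rfl)]
      apply Finset.sum_congr rfl
      intro a _
      rw [← Fintype.sum_equiv (Equiv.addRight q) _ _ (fun b => rfl)]
      apply Finset.sum_congr rfl
      intro b _
      simp only [Equiv.coe_addRight, conjW_apply, hy, RCLike.star_def, _root_.map_mul,
        chi_conj]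
      have h1 : chi d (- -(p * a)) = chi d (p * a) := chi_congr d (by ring)
      have h2 : chi d (p * (a + q - (b + q))) = chi d (p * a) * chi d (-(p * b)) := by
        rw [← chi_add]; exact chi_congr d (by ring)
      rw [h1, h2]
      ring_nf
    rw [key]; exact this

lemma trace_conjW (q p : ZMod d) (X : Matrix (ZMod d) (ZMod d) ℂ) :
    (conjW d q p X).trace = X.trace := by
  simp only [Matrix.trace, Matrix.diag, conjW_apply, sub_self, mul_zero, chi_zero, one_mul]
  exact Fintype.sum_equiv (Equiv.subRight q) _ _ (fun a => rfl)

lemma trace_mul_Q (X : Matrix (ZMod d) (ZMod d) ℂ) (m : ZMod d) :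
    (X * Qobs d m).trace = X m m := by
  simp [Matrix.trace, Matrix.diag, Matrix.mul_apply, Qobs, Matrix.single,
    ite_and, Finset.sum_ite_eq, Finset.sum_ite_eq']

lemma trace_mul_P (X : Matrix (ZMod d) (ZMod d) ℂ) (s : ZMod d) :
    (X * Pobs d s).trace = (∑ i, ∑ j, X i j * chi d ((j - i) * s)) / d := by
  simp only [Matrix.trace, Matrix.diag, Matrix.mul_apply, Pobs, Matrix.of_apply,
    Finset.sum_div]
  apply Finset.sum_congr rfl; intro i _
  apply Finset.sum_congr rfl; intro j _
  ring

lemma trace_P_mul_P (m s : ZMod d) :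
    (Pobs d m * Pobs d s).trace = if m = s then 1 else 0 := by
  have hd : (d : ℂ) ≠ 0 := Nat.cast_ne_zero.mpr (NeZero.ne d)
  simp only [Matrix.trace, Matrix.diag, Matrix.mul_apply, Pobs, Matrix.of_apply]
  have key : ∀ i j : ZMod d, chi d ((i - j) * m) / d * (chi d ((j - i) * s) / d)
      = chi d ((i - j) * (m - s)) / d / d := by
    intro i j
    rw [div_mul_div_comm, ← chi_add, chi_congr d (show (i - j) * m + (j - i) * s
      = (i - j) * (m - s) by ring), div_div]
  simp only [key]
  have inner : ∀ i : ZMod d, ∑ j : ZMod d, chi d ((i - j) * (m - s)) / d / d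
      = (if m - s = 0 then (d : ℂ) else 0) / d / d := by
    intro i
    rw [← Finset.sum_div, ← Finset.sum_div]
    congr 2
    exact (Fintype.sum_equiv (Equiv.subLeft i) _ (fun t => chi d (t * (m - s)))
      (fun t => rfl)).trans (sum_chi d (m - s))
  simp only [inner, Finset.sum_const, Finset.card_univ, ZMod.card, nsmul_eq_mul]
  rcases eq_or_ne m s with rfl | hms
  · rw [if_pos (sub_self m), if_pos rfl]
    field_simp
  · rw [if_neg (fun h => hms (sub_eq_zero.mp h)), if_neg hms]
    simp

lemma conjW_Q (q p m : ZMod d) : conjW d q p (Qobs d m) = Qobs d (m + q) := by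
  ext i j
  simp only [conjW_apply, Qobs, Matrix.single, Matrix.of_apply]
  have hi : (m = i - q) ↔ (m + q = i) := eq_sub_iff_add_eq
  have hj : (m = j - q) ↔ (m + q = j) := eq_sub_iff_add_eq
  rw [if_congr (and_congr hi hj) rfl rfl]
  split_ifs with h
  · obtain ⟨h1, h2⟩ := h
    rw [← h1, ← h2]
    simp [chi_zero]
  · rw [mul_zero]

lemma conjW_P (q p s : ZMod d) : conjW d q p (Pobs d s) = Pobs d (s + p) := by
  ext i j
  simp only [conjW_apply, Pobs, Matrix.of_apply]
  rw [show i - q - (j - q) = i - j by ring, ← mul_div_assoc, ← chi_add,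
    chi_congr d (show p * (i - j) + (i - j) * s = (i - j) * (s + p) by ring)]

lemma trace_conjW_mul (q p : ZMod d) (X M : Matrix (ZMod d) (ZMod d) ℂ) :
    ((conjW d (-q) (-p) X) * M).trace = (X * conjW d q p M).trace := by
  simp only [Matrix.trace, Matrix.diag, Matrix.mul_apply, conjW_apply]
  rw [← Fintype.sum_equiv (Equiv.subRight q) _ _ (fun a => rfl)]
  apply Finset.sum_congr rfl; intro a _
  rw [← Fintype.sum_equiv (Equiv.subRight q) _ _ (fun b => rfl)]
  apply Finset.sum_congr rfl; intro b _
  simp only [Equiv.subRight_apply]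
  have e1 : a - q - -q = a := by ring
  have e2 : b - q - -q = b := by ring
  have e3 : chi d (-p * (a - q - (b - q))) = chi d (p * (b - a)) := chi_congr d (by ring)
  rw [e1, e2, e3]
  ring

lemma psd_smul {X : Matrix (ZMod d) (ZMod d) ℂ} (hX : X.PosSemidef) {c : ℝ} (hc : 0 ≤ c) :
    (((c : ℂ)) • X).PosSemidef := by
  rw [Matrix.posSemidef_iff_dotProduct_mulVec]
  constructor
  · show (((c : ℂ)) • X)ᴴ = ((c : ℂ)) • X
    rw [Matrix.conjTranspose_smul, hX.1]
    congr 1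
    simp [Complex.conj_ofReal]
  · intro x
    rw [Matrix.smul_mulVec, dotProduct_smul]
    exact mul_nonneg (by exact_mod_cast Complex.zero_le_real.mpr hc) (hX.dotProduct_mulVec_nonneg x)

lemma sum_Q : ∑ t : ZMod d, Qobs d t = 1 := by
  ext i j
  rw [Matrix.sum_apply]
  simp [Qobs, Matrix.single, ite_and, Finset.sum_ite_eq', Matrix.one_apply]

lemma A_apply (f : ZMod d → ℝ) (q m m' : ZMod d) :
    (∑ t, f (q - t) • Qobs d t) m m' = if m = m' then (f (q - m) : ℂ) else 0 := by
  simp only [Matrix.sum_apply, Matrix.smul_apply, Qobs, Matrix.single, Matrix.of_apply,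
    ite_and, smul_ite, Complex.real_smul, mul_one, smul_zero]
  rw [Finset.sum_ite_eq' Finset.univ m (fun t => if t = m' then ((f (q - t) : ℝ) : ℂ) else 0)]
  simp

lemma B_trace (f : ZMod d → ℝ) (p s : ZMod d) :
    ((∑ m, f (p - m) • Pobs d m) * Pobs d s).trace = (f (p - s) : ℂ) := by
  rw [Finset.sum_mul, Matrix.trace_sum]
  have : ∀ m : ZMod d, ((f (p - m) • Pobs d m) * Pobs d s).trace
      = (f (p - m) : ℂ) * (if m = s then 1 else 0) := by
    intro m
    rw [Matrix.smul_mul, Matrix.trace_smul, trace_P_mul_P, Complex.real_smul]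
  simp only [this, mul_ite, mul_one, mul_zero]
  rw [Finset.sum_ite_eq' Finset.univ s (fun m => ((f (p - m) : ℝ) : ℂ))]
  simp

lemma keyP (ρ : Matrix (ZMod d) (ZMod d) ℂ) (ν : ZMod d → ℝ)
    (hν' : ∀ s, (ρ * Pobs d s).trace = (ν (-s) : ℂ)) (p c : ZMod d) :
    ∑ m : ZMod d, (ν (p - m) : ℂ) * chi d (c * m)
      = chi d (c * p) * ∑ a : ZMod d, ρ a (a - c) := by
  have hd : (d : ℂ) ≠ 0 := Nat.cast_ne_zero.mpr (NeZero.ne d)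
  have step1 : ∀ m : ZMod d, (ν (p - m) : ℂ) = (ρ * Pobs d (m - p)).trace := by
    intro m
    rw [hν' (m - p), neg_sub]
  calc ∑ m : ZMod d, (ν (p - m) : ℂ) * chi d (c * m)
      = ∑ m : ZMod d, ∑ a : ZMod d, ∑ b : ZMod d,
          ρ a b * chi d ((b - a) * (m - p)) * chi d (c * m) / d := by
        apply Finset.sum_congr rfl; intro m _
        rw [step1 m, trace_mul_P, div_mul_eq_mul_div, Finset.sum_mul, Finset.sum_div]
        apply Finset.sum_congr rfl; intro a _
        rw [Finset.sum_mul, Finset.sum_div]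
    _ = ∑ a : ZMod d, ∑ b : ZMod d, ∑ m : ZMod d,
          ρ a b * chi d ((b - a) * (m - p)) * chi d (c * m) / d := by
        rw [Finset.sum_comm]
        apply Finset.sum_congr rfl; intro a _
        rw [Finset.sum_comm]
    _ = ∑ a : ZMod d, ∑ b : ZMod d,
          ρ a b * chi d (-((b - a) * p)) * (∑ m : ZMod d, chi d (m * (b - a + c))) / d := by
        apply Finset.sum_congr rfl; intro a _
        apply Finset.sum_congr rfl; intro b _
        rw [div_eq_mul_inv, Finset.mul_sum, Finset.sum_mul]
        apply Finset.sum_congr rfl; intro m _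
        have hsplit : chi d ((b - a) * (m - p)) * chi d (c * m)
            = chi d (-((b - a) * p)) * chi d (m * (b - a + c)) := by
          rw [← chi_add, ← chi_add]
          exact chi_congr d (by ring)
        rw [div_eq_mul_inv, mul_assoc (ρ a b), hsplit]
        ring
    _ = ∑ a : ZMod d, ρ a (a - c) * chi d (c * p) * d / d := by
        apply Finset.sum_congr rfl; intro a _
        rw [Finset.sum_eq_single (a - c)]
        · rw [sum_chi, if_pos (by ring), chi_congr d (show -((a - c - a) * p) = c * p by ring)]
        · intro b _ hb
          rw [sum_chi, if_neg (fun hh => hb (by linear_combination hh)), mul_zero, zero_div]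
        · intro habs
          exact absurd (Finset.mem_univ _) habs
    _ = chi d (c * p) * ∑ a : ZMod d, ρ a (a - c) := by
        rw [Finset.mul_sum]
        apply Finset.sum_congr rfl; intro a _
        rw [mul_div_cancel_right₀ _ hd]
        ring

end S13

set_option maxHeartbeats 1000000 in
theorem stmt13 (d : ℕ) [NeZero d] (μ ν : ZMod d → ℝ)
    (hμ : (∀ j, 0 ≤ μ j) ∧ ∑ j, μ j = 1)
    (hν : (∀ k, 0 ≤ ν k) ∧ ∑ k, ν k = 1) :
    JointlyMeasurable
        (fun j => ∑ q, μ (j - q) • Qobs d q)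
        (fun k => ∑ p, ν (k - p) • Pobs d p) ↔
      ∃ ρ : Matrix (ZMod d) (ZMod d) ℂ, ρ.PosSemidef ∧ ρ.trace = 1 ∧
        (∀ j, (ρ * Qobs d (-j)).trace = (μ j : ℂ)) ∧
        (∀ k, (ρ * Pobs d (-k)).trace = (ν k : ℂ)) := by
  obtain ⟨hμ0, hμ1⟩ := hμ
  obtain ⟨hν0, hν1⟩ := hν
  have hd : (d : ℂ) ≠ 0 := Nat.cast_ne_zero.mpr (NeZero.ne d)
  have hcast : (((d : ℝ)⁻¹ : ℝ) : ℂ) = (d : ℂ)⁻¹ := by push_cast; ring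
  constructor
  · rintro ⟨G, ⟨hGpos, hGsum⟩, hGA, hGB⟩
    have hGA' : ∀ x : ZMod d, ∑ y : ZMod d, G (x, y) = ∑ q, μ (x - q) • Qobs d q := hGA
    have hGB' : ∀ y : ZMod d, ∑ x : ZMod d, G (x, y) = ∑ p, ν (y - p) • Pobs d p := hGB
    set S : Matrix (ZMod d) (ZMod d) ℂ :=
      ∑ qp : ZMod d × ZMod d, S13.conjW d (-qp.1) (-qp.2) (G qp) with hS
    refine ⟨(((d : ℝ)⁻¹ : ℝ) : ℂ) • S, ?_, ?_, ?_, ?_⟩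
    · apply S13.psd_smul d ?_ (by positivity)
      apply Finset.sum_induction _ _ (fun _ _ ha hb => ha.add hb) Matrix.PosSemidef.zero
      intro qp _
      exact S13.conjW_posSemidef d _ _ (hGpos qp)
    · rw [Matrix.trace_smul, hS, Matrix.trace_sum]
      have : ∀ qp : ZMod d × ZMod d, (S13.conjW d (-qp.1) (-qp.2) (G qp)).trace
          = (G qp).trace := fun qp => S13.trace_conjW d _ _ _
      rw [Finset.sum_congr rfl (fun qp _ => this qp), ← Matrix.trace_sum, hGsum,
        Matrix.trace_one]
      simp only [smul_eq_mul, hcast, ZMod.card]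
      exact inv_mul_cancel₀ hd
    · intro j
      rw [Matrix.smul_mul, Matrix.trace_smul, hS, Finset.sum_mul, Matrix.trace_sum]
      have step : ∀ qp : ZMod d × ZMod d,
          (S13.conjW d (-qp.1) (-qp.2) (G qp) * Qobs d (-j)).trace
            = (G qp * Qobs d (-j + qp.1)).trace := by
        intro qp
        rw [S13.trace_conjW_mul, S13.conjW_Q]
      rw [Finset.sum_congr rfl (fun qp _ => step qp), Fintype.sum_prod_type]
      have step2 : ∀ q : ZMod d, ∑ p : ZMod d, (G (q, p) * Qobs d (-j + q)).trace
          = (μ j : ℂ) := by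
        intro q
        rw [← Matrix.trace_sum, ← Finset.sum_mul, hGA' q, S13.trace_mul_Q, S13.A_apply,
          if_pos rfl, show q - (-j + q) = j from by ring]
      rw [Finset.sum_congr rfl (fun q _ => step2 q), Finset.sum_const, Finset.card_univ]
      simp only [ZMod.card, nsmul_eq_mul, smul_eq_mul, hcast]
      rw [← mul_assoc, inv_mul_cancel₀ hd, one_mul]
    · intro k
      rw [Matrix.smul_mul, Matrix.trace_smul, hS, Finset.sum_mul, Matrix.trace_sum]
      have step : ∀ qp : ZMod d × ZMod d,
          (S13.conjW d (-qp.1) (-qp.2) (G qp) * Pobs d (-k)).trace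
            = (G qp * Pobs d (-k + qp.2)).trace := by
        intro qp
        rw [S13.trace_conjW_mul, S13.conjW_P]
      rw [Finset.sum_congr rfl (fun qp _ => step qp), Fintype.sum_prod_type, Finset.sum_comm]
      have step2 : ∀ p : ZMod d, ∑ q : ZMod d, (G (q, p) * Pobs d (-k + p)).trace
          = (ν k : ℂ) := by
        intro p
        rw [← Matrix.trace_sum, ← Finset.sum_mul, hGB' p, S13.B_trace,
          show p - (-k + p) = k from by ring]
      rw [Finset.sum_congr rfl (fun p _ => step2 p), Finset.sum_const, Finset.card_univ]
      simp only [ZMod.card, nsmul_eq_mul, smul_eq_mul, hcast]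
      rw [← mul_assoc, inv_mul_cancel₀ hd, one_mul]
  · rintro ⟨ρ, hρpsd, hρtr, hρQ, hρP⟩
    have hρdiag : ∀ m : ZMod d, ρ m m = (μ (-m) : ℂ) := by
      intro m
      have := hρQ (-m)
      rwa [neg_neg, S13.trace_mul_Q] at this
    have hν' : ∀ s, (ρ * Pobs d s).trace = (ν (-s) : ℂ) := by
      intro s
      have := hρP (-s)
      rwa [neg_neg] at this
    have hA : ∀ q : ZMod d, (∑ p : ZMod d, (((d : ℝ)⁻¹ : ℝ) : ℂ) • S13.conjW d q p ρ)
        = ∑ t, μ (q - t) • Qobs d t := by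
      intro q
      ext i j
      rw [Matrix.sum_apply]
      have lhs_term : ∀ p : ZMod d, ((((d : ℝ)⁻¹ : ℝ) : ℂ) • S13.conjW d q p ρ) i j
          = (d : ℂ)⁻¹ * ρ (i - q) (j - q) * chi d (p * (i - j)) := by
        intro p
        rw [Matrix.smul_apply, S13.conjW_apply, hcast]
        simp only [smul_eq_mul]
        ring
      rw [Finset.sum_congr rfl (fun p _ => lhs_term p), ← Finset.mul_sum, S13.sum_chi,
        S13.A_apply]
      by_cases h : i = j
      · rw [if_pos (sub_eq_zero.mpr h), if_pos h, h, hρdiag (j - q),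
          show -(j - q) = q - j from by ring]
        field_simp
      · rw [if_neg (fun hh : i - j = 0 => h (sub_eq_zero.mp hh)), if_neg h, mul_zero]
    have hB : ∀ p : ZMod d, (∑ q : ZMod d, (((d : ℝ)⁻¹ : ℝ) : ℂ) • S13.conjW d q p ρ)
        = ∑ m, ν (p - m) • Pobs d m := by
      intro p
      ext i j
      rw [Matrix.sum_apply]
      have lhs_term : ∀ q : ZMod d, ((((d : ℝ)⁻¹ : ℝ) : ℂ) • S13.conjW d q p ρ) i j
          = (d : ℂ)⁻¹ * chi d (p * (i - j)) * ρ (i - q) (j - q) := by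
        intro q
        rw [Matrix.smul_apply, S13.conjW_apply, hcast]
        simp only [smul_eq_mul]
        ring
      rw [Finset.sum_congr rfl (fun q _ => lhs_term q), ← Finset.mul_sum]
      have reidx : ∑ q : ZMod d, ρ (i - q) (j - q) = ∑ a : ZMod d, ρ a (a - (i - j)) := by
        refine Fintype.sum_equiv (Equiv.subLeft i) _ _ (fun q => ?_)
        rw [Equiv.subLeft_apply]
        congr 1
        ring
      rw [reidx]
      have rhs_eq : ∀ m : ZMod d, ((ν (p - m) : ℝ) • Pobs d m) i j
          = (ν (p - m) : ℂ) * chi d ((i - j) * m) / d := by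
        intro m
        rw [Matrix.smul_apply]
        show (ν (p - m) : ℝ) • (chi d ((i - j) * m) / d) = _
        rw [Complex.real_smul]
        ring
      rw [Matrix.sum_apply, Finset.sum_congr rfl (fun m _ => rhs_eq m), ← Finset.sum_div,
        S13.keyP d ρ ν hν' p, S13.chi_congr d (show (i - j) * p = p * (i - j) from by ring)]
      ring
    refine ⟨fun qp => (((d : ℝ)⁻¹ : ℝ) : ℂ) • S13.conjW d qp.1 qp.2 ρ, ⟨?_, ?_⟩, ?_, ?_⟩
    · intro qp
      exact S13.psd_smul d (S13.conjW_posSemidef d _ _ hρpsd) (by positivity)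
    · rw [Fintype.sum_prod_type]
      rw [Finset.sum_congr rfl (fun q _ => hA q), Finset.sum_comm]
      have col : ∀ t : ZMod d, ∑ q : ZMod d, μ (q - t) • Qobs d t = Qobs d t := by
        intro t
        have hsum1 : (∑ q : ZMod d, μ (q - t)) = 1 := by
          rw [← hμ1]
          exact Fintype.sum_equiv (Equiv.subRight t) _ μ (fun q => rfl)
        rw [← Finset.sum_smul, hsum1, one_smul]
      rw [Finset.sum_congr rfl (fun t _ => col t)]
      exact S13.sum_Q d
    · exact hA
    · exact hB
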